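/- Let k be a positive integer, C > 0 a constant, p a prime, and S ⊆ ℤ_p with |S| ≥ 2. Set m_0 = 0 and m_{k+1} = |S|. Then the sum over all k-tuples of integers 1 ≤ m_1 < ... < m_k < |S| of Σ_{j=0}^{k} Π_{i∈{0,...,k}\{j}} (1/p + C·√(log|S|)/(|S|·√(m_{i+1} - m_i))) is at most (k+1)·(|S|/p + 2C·√(log|S|)/√|S|)^k. -/

import Mathlib

open scoped Classical

/-- Extend a tuple `m : Fin k → ℕ` to indices `0, …, k+1` by `m_0 = 0` and `m_{k+1} = n`. -/
def extM (k n : ℕ) (m : Fin k → ℕ) : ℕ → ℕ := fun i =>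
  if h : 0 < i ∧ i ≤ k then m ⟨i - 1, by omega⟩ else if i = 0 then 0 else n

namespace Stmt13Aux

/-- gap between consecutive extended values -/
def gp (k n : ℕ) (m : Fin k → ℕ) (i : ℕ) : ℕ := extM k n m (i + 1) - extM k n m i

lemma extM_zero (k n : ℕ) (m : Fin k → ℕ) : extM k n m 0 = 0 := by
  simp [extM]

lemma extM_mid (k n : ℕ) (m : Fin k → ℕ) (i : ℕ) (h1 : 0 < i) (h2 : i ≤ k) :
    extM k n m i = m ⟨i - 1, by omega⟩ := by
  rw [extM, dif_pos ⟨h1, h2⟩]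

lemma extM_top (k n : ℕ) (m : Fin k → ℕ) : extM k n m (k + 1) = n := by
  rw [extM, dif_neg (by omega), if_neg (by omega)]

section

variable {k n : ℕ} {m : Fin k → ℕ}
variable (hk : 0 < k) (hm1 : ∀ i, 1 ≤ m i) (hm2 : ∀ i, m i < n) (hmono : StrictMono m)

include hk hm1 hm2 hmono

lemma extM_lt {i : ℕ} (hi : i ≤ k) : extM k n m i < extM k n m (i + 1) := by
  rcases Nat.eq_zero_or_pos i with rfl | hpos
  · rw [extM_zero, extM_mid k n m 1 one_pos hk]
    exact hm1 _
  · rcases Nat.lt_or_ge i k with hik | hik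
    · rw [extM_mid k n m i hpos (le_of_lt hik), extM_mid k n m (i+1) (by omega) (by omega)]
      exact hmono (by simp [Fin.lt_def]; omega)
    · have hik' : i = k := le_antisymm hi hik
      have htop : extM k n m (i + 1) = n := by rw [hik']; exact extM_top k n m
      rw [extM_mid k n m i hpos hi, htop]
      exact hm2 _

omit hk hm1 hmono in
lemma extM_le_n {t : ℕ} : extM k n m t ≤ n := by
  rcases Nat.eq_zero_or_pos t with rfl | hpos
  · rw [extM_zero]; omega
  · rcases le_or_gt t k with htk | htk
    · rw [extM_mid k n m t hpos htk]
      exact le_of_lt (hm2 _)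
    · rw [extM, dif_neg (by omega), if_neg (by omega)]

lemma gp_pos {i : ℕ} (hi : i ≤ k) : 1 ≤ gp k n m i := by
  have := extM_lt hk hm1 hm2 hmono hi
  unfold gp; omega

omit hk hm1 hmono in
lemma gp_le_n {i : ℕ} : gp k n m i ≤ n := by
  have := extM_le_n hm2 (t := i + 1)
  unfold gp; omega

lemma extM_add_gp {i : ℕ} (hi : i ≤ k) :
    extM k n m (i + 1) = extM k n m i + gp k n m i := by
  have := extM_lt hk hm1 hm2 hmono hi
  unfold gp; omega

lemma extM_eq_sum {t : ℕ} (ht : t ≤ k + 1) :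
    extM k n m t = ∑ i ∈ Finset.range t, gp k n m i := by
  induction t with
  | zero => simp [extM_zero]
  | succ s ih =>
    rw [Finset.sum_range_succ, ← ih (by omega),
      extM_add_gp hk hm1 hm2 hmono (by omega)]

lemma gp_sum : ∑ i ∈ Finset.range (k + 1), gp k n m i = n := by
  rw [← extM_eq_sum hk hm1 hm2 hmono le_rfl, extM_top]

end

lemma eq_of_gp {k n : ℕ} {m m' : Fin k → ℕ} (hk : 0 < k)
    (hm1 : ∀ i, 1 ≤ m i) (hm2 : ∀ i, m i < n) (hmono : StrictMono m)
    (hm1' : ∀ i, 1 ≤ m' i) (hm2' : ∀ i, m' i < n) (hmono' : StrictMono m')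
    (j : ℕ) (hj : j ≤ k)
    (h : ∀ i ≤ k, i ≠ j → gp k n m i = gp k n m' i) : m = m' := by
  have hjr : j ∈ Finset.range (k + 1) := Finset.mem_range.2 (by omega)
  have h1 : ∑ i ∈ (Finset.range (k + 1)).erase j, gp k n m i
      = ∑ i ∈ (Finset.range (k + 1)).erase j, gp k n m' i := by
    refine Finset.sum_congr rfl fun i hi => ?_
    have h2 := Finset.mem_erase.1 hi
    exact h i (by have := Finset.mem_range.1 h2.2; omega) h2.1
  have h2 := Finset.add_sum_erase _ (gp k n m) hjr
  have h2' := Finset.add_sum_erase _ (gp k n m') hjr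
  have hs := gp_sum hk hm1 hm2 hmono
  have hs' := gp_sum hk hm1' hm2' hmono'
  have hjeq : gp k n m j = gp k n m' j := by omega
  have hall : ∀ i ≤ k, gp k n m i = gp k n m' i := by
    intro i hi
    by_cases hij : i = j
    · subst hij; exact hjeq
    · exact h i hi hij
  funext i
  have e1 : m i = extM k n m (i.1 + 1) := by
    rw [extM_mid k n m (i.1 + 1) (by omega) (by omega)]
    congr 1
  have e1' : m' i = extM k n m' (i.1 + 1) := by
    rw [extM_mid k n m' (i.1 + 1) (by omega) (by omega)]
    congr 1
  rw [e1, e1', extM_eq_sum hk hm1 hm2 hmono (by omega),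
    extM_eq_sum hk hm1' hm2' hmono' (by omega)]
  refine Finset.sum_congr rfl fun r hr => ?_
  exact hall r (by have := Finset.mem_range.1 hr; omega)

lemma sum_inv_sqrt (n : ℕ) :
    ∑ d ∈ Finset.Icc 1 n, 1 / Real.sqrt d ≤ 2 * Real.sqrt n := by
  have key : ∀ i : ℕ, 1 / Real.sqrt (i + 1) ≤ 2 * Real.sqrt (i + 1) - 2 * Real.sqrt i := by
    intro i
    have ha : (0:ℝ) < Real.sqrt (i + 1) := Real.sqrt_pos.2 (by positivity)
    have hb : (0:ℝ) ≤ Real.sqrt i := Real.sqrt_nonneg _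
    have ha2 : Real.sqrt (i + 1) ^ 2 = (i : ℝ) + 1 := Real.sq_sqrt (by positivity)
    have hb2 : Real.sqrt i ^ 2 = (i : ℝ) := Real.sq_sqrt (by positivity)
    rw [div_le_iff₀ ha]
    nlinarith [sq_nonneg (Real.sqrt (i + 1) - Real.sqrt i)]
  have h0 : ∑ d ∈ Finset.Icc 1 n, 1 / Real.sqrt d
      = ∑ i ∈ Finset.range n, 1 / Real.sqrt (i + 1) := by
    rw [← Finset.Ico_add_one_right_eq_Icc, Finset.sum_Ico_eq_sum_range]
    simp [add_comm]
  rw [h0]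
  calc ∑ i ∈ Finset.range n, 1 / Real.sqrt (i + 1)
      ≤ ∑ i ∈ Finset.range n, (2 * Real.sqrt (i + 1) - 2 * Real.sqrt i) := by
        refine Finset.sum_le_sum fun i _ => ?_
        exact key i
    _ = 2 * Real.sqrt n - 2 * Real.sqrt 0 := by
        have h := Finset.sum_range_sub (fun i : ℕ => 2 * Real.sqrt i) n
        push_cast at h
        exact h
    _ ≤ 2 * Real.sqrt n := by simp [Real.sqrt_zero]

end Stmt13Aux


open Stmt13Aux in
set_option maxHeartbeats 1000000 in
theorem stmt13 (k : ℕ) (hk : 0 < k) (C : ℝ) (hC : 0 < C) (p : ℕ) [Fact p.Prime]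
    (S : Finset (ZMod p)) (hS : 2 ≤ S.card) :
    ∑ m ∈ (Fintype.piFinset fun _ : Fin k => Finset.Ico 1 S.card).filter
        (fun m => StrictMono m),
      ∑ j ∈ Finset.range (k + 1), ∏ i ∈ (Finset.range (k + 1)).erase j,
        (1 / (p : ℝ) + C * Real.sqrt (Real.log S.card) /
          (S.card * Real.sqrt ((extM k S.card m (i + 1) : ℝ) - extM k S.card m i))) ≤
      (k + 1 : ℝ) * ((S.card : ℝ) / p +
        2 * C * Real.sqrt (Real.log S.card) / Real.sqrt S.card) ^ k := by
  classical
  set n := S.card with hn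
  have hn0 : (0:ℝ) < n := by
    have : (2:ℝ) ≤ n := by exact_mod_cast hS
    linarith
  have hp0 : (0:ℝ) < p := by exact_mod_cast (Fact.out : p.Prime).pos
  set L : ℝ := Real.sqrt (Real.log n) with hL
  have hL0 : 0 ≤ L := Real.sqrt_nonneg _
  set f : ℕ → ℝ := fun d => 1 / (p : ℝ) + C * L / (n * Real.sqrt d) with hf
  have hfnn : ∀ d, 0 ≤ f d := by
    intro d
    rw [hf]
    have h1 : (0:ℝ) ≤ 1 / (p:ℝ) := by positivity
    have h2 : (0:ℝ) ≤ C * L / (n * Real.sqrt d) := by positivity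
    simpa using add_nonneg h1 h2
  set T := (Fintype.piFinset fun _ : Fin k => Finset.Ico 1 n).filter
      (fun m => StrictMono m) with hT
  have hmemT : ∀ m ∈ T, (∀ i, 1 ≤ m i) ∧ (∀ i, m i < n) ∧ StrictMono m := by
    intro m hm
    rw [hT, Finset.mem_filter, Fintype.mem_piFinset] at hm
    exact ⟨fun i => (Finset.mem_Ico.1 (hm.1 i)).1,
      fun i => (Finset.mem_Ico.1 (hm.1 i)).2, hm.2⟩
  set B : ℝ := (n : ℝ) / p + 2 * C * L / Real.sqrt n with hB
  -- bound on the single-gap sum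
  have hsum_nonneg : 0 ≤ ∑ d ∈ Finset.Icc 1 n, f d :=
    Finset.sum_nonneg fun d _ => hfnn d
  have hsum_f : ∑ d ∈ Finset.Icc 1 n, f d ≤ B := by
    have hsplit : ∑ d ∈ Finset.Icc 1 n, f d
        = (n : ℝ) * (1 / (p : ℝ)) + (C * L / n) * ∑ d ∈ Finset.Icc 1 n, 1 / Real.sqrt d := by
      rw [hf, Finset.sum_add_distrib, Finset.sum_const, Nat.card_Icc, Finset.mul_sum]
      congr 1
      · simp
      · refine Finset.sum_congr rfl fun d _ => ?_
        rw [div_mul_div_comm]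
        ring_nf
    rw [hsplit, hB]
    have h2 : (C * L / n) * ∑ d ∈ Finset.Icc 1 n, 1 / Real.sqrt d
        ≤ (C * L / n) * (2 * Real.sqrt n) :=
      mul_le_mul_of_nonneg_left (sum_inv_sqrt n) (by positivity)
    have h3 : (C * L / n) * (2 * Real.sqrt n) = 2 * C * L / Real.sqrt n := by
      have hs : Real.sqrt n * Real.sqrt n = (n : ℝ) := Real.mul_self_sqrt hn0.le
      have hs0 : (0:ℝ) < Real.sqrt n := Real.sqrt_pos.2 hn0
      field_simp
      linear_combination L * hs
    have h1 : (n : ℝ) * (1 / (p : ℝ)) = (n : ℝ) / p := by ring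
    linarith
  have hcast : ∀ m ∈ T, ∀ i ≤ k,
      ((extM k n m (i + 1) : ℝ) - (extM k n m i : ℝ)) = (gp k n m i : ℝ) := by
    intro m hm i hi
    obtain ⟨h1, h2, h3⟩ := hmemT m hm
    have hlt := extM_lt hk h1 h2 h3 hi
    rw [gp, Nat.cast_sub hlt.le]
  -- the key bound for each j
  have key : ∀ j ∈ Finset.range (k + 1),
      ∑ m ∈ T, ∏ i ∈ (Finset.range (k + 1)).erase j, f (gp k n m i) ≤ B ^ k := by
    intro j hj
    have hjk : j ≤ k := by have := Finset.mem_range.1 hj; omega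
    set skip : Fin k → ℕ := fun i => if (i : ℕ) < j then (i : ℕ) else (i : ℕ) + 1 with hskip
    have hskipinj : Function.Injective skip := by
      intro a b hab
      simp only [hskip] at hab
      apply Fin.ext
      split_ifs at hab <;> omega
    have hskip_le : ∀ i : Fin k, skip i ≤ k := by
      intro i
      have := i.2
      simp only [hskip]
      split_ifs <;> omega
    have himg : (Finset.range (k + 1)).erase j = Finset.image skip Finset.univ := by
      ext x
      simp only [Finset.mem_erase, Finset.mem_range, Finset.mem_image, Finset.mem_univ,
        true_and, hskip]
      constructor
      · rintro ⟨hxj, hxk⟩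
        rcases lt_or_gt_of_ne hxj with h | h
        · exact ⟨⟨x, by omega⟩, by simp only []; split_ifs <;> omega⟩
        · exact ⟨⟨x - 1, by omega⟩, by simp only []; split_ifs <;> omega⟩
      · rintro ⟨i, rfl⟩
        have := i.2
        constructor <;> split_ifs <;> omega
    have hinjOn : ∀ m₁ ∈ T, ∀ m₂ ∈ T,
        (fun i : Fin k => gp k n m₁ (skip i)) = (fun i : Fin k => gp k n m₂ (skip i))
        → m₁ = m₂ := by
      intro m₁ hm₁ m₂ hm₂ h
      obtain ⟨h1, h2, h3⟩ := hmemT m₁ hm₁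
      obtain ⟨h1', h2', h3'⟩ := hmemT m₂ hm₂
      refine eq_of_gp hk h1 h2 h3 h1' h2' h3' j hjk fun i hi hij => ?_
      have hmem : i ∈ Finset.image skip Finset.univ := by
        rw [← himg]
        exact Finset.mem_erase.2 ⟨hij, Finset.mem_range.2 (by omega)⟩
      obtain ⟨i0, _, rfl⟩ := Finset.mem_image.1 hmem
      exact congrFun h i0
    calc ∑ m ∈ T, ∏ i ∈ (Finset.range (k + 1)).erase j, f (gp k n m i)
        = ∑ m ∈ T, ∏ i : Fin k, f (gp k n m (skip i)) := by
          refine Finset.sum_congr rfl fun m hm => ?_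
          rw [himg, Finset.prod_image fun a _ b _ h => hskipinj h]
      _ = ∑ g ∈ T.image (fun m => fun i : Fin k => gp k n m (skip i)),
            ∏ i : Fin k, f (g i) := by rw [Finset.sum_image hinjOn]
      _ ≤ ∑ g ∈ Fintype.piFinset (fun _ : Fin k => Finset.Icc 1 n),
            ∏ i : Fin k, f (g i) := by
          refine Finset.sum_le_sum_of_subset_of_nonneg ?_ ?_
          · intro g hg
            simp only [Finset.mem_image] at hg
            obtain ⟨m, hm, rfl⟩ := hg
            obtain ⟨h1, h2, h3⟩ := hmemT m hm
            rw [Fintype.mem_piFinset]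
            intro i
            exact Finset.mem_Icc.2 ⟨gp_pos hk h1 h2 h3 (hskip_le i), gp_le_n h2⟩
          · intro g _ _
            exact Finset.prod_nonneg fun i _ => hfnn _
      _ = (∑ d ∈ Finset.Icc 1 n, f d) ^ k := (Finset.sum_pow' _ _ k).symm
      _ ≤ B ^ k := pow_le_pow_left₀ hsum_nonneg hsum_f k
  calc ∑ m ∈ T, ∑ j ∈ Finset.range (k + 1), ∏ i ∈ (Finset.range (k + 1)).erase j,
        (1 / (p : ℝ) + C * L / (n * Real.sqrt ((extM k n m (i + 1) : ℝ) - extM k n m i)))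
      = ∑ m ∈ T, ∑ j ∈ Finset.range (k + 1), ∏ i ∈ (Finset.range (k + 1)).erase j,
          f (gp k n m i) := by
        refine Finset.sum_congr rfl fun m hm => Finset.sum_congr rfl fun j hj =>
          Finset.prod_congr rfl fun i hi => ?_
        have hik : i ≤ k := by
          have := Finset.mem_range.1 (Finset.mem_of_mem_erase hi); omega
        rw [hf]
        simp only []
        rw [hcast m hm i hik]
    _ = ∑ j ∈ Finset.range (k + 1), ∑ m ∈ T, ∏ i ∈ (Finset.range (k + 1)).erase j,
          f (gp k n m i) := Finset.sum_comm
    _ ≤ ∑ _j ∈ Finset.range (k + 1), B ^ k := Finset.sum_le_sum key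
    _ = (k + 1 : ℝ) * B ^ k := by
        rw [Finset.sum_const, Finset.card_range, nsmul_eq_mul]
        push_cast
        ring
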